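/- Let γ ∈ (0,2) and let L be slowly varying at infinity. If there exists C > 0 such that G(x) ≤ C·x^{2−γ}·L(1/x) for all x ∈ (0,π], then there exists C' > 0 such that V(n) ≤ C'·n^γ·L(n) for every integer n ≥ 1. -/

import Mathlib

set_option maxHeartbeats 1000000

open MeasureTheory Filter Set Topology Pointwise

/-- Fejér-type kernel: `I_n(y) = sin²(ny/2)/sin²(y/2)` for `y ≠ 0`, `I_n(0) = n²`. -/
noncomputable def fejerKernel (n : ℕ) (y : ℝ) : ℝ :=
  if y = 0 then (n : ℝ) ^ 2 else Real.sin (n * y / 2) ^ 2 / Real.sin (y / 2) ^ 2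

/-- Variance functional `V(n) = ∫_{[0,π]} I_n(y) dμ(y)`. -/
noncomputable def varV (μ : Measure ℝ) (n : ℕ) : ℝ :=
  ∫ y in Icc 0 Real.pi, fejerKernel n y ∂μ

/-- `G(x) = μ([0,x])` for a measure `μ` on `[0,π]`. -/
noncomputable def specG (μ : Measure ℝ) (x : ℝ) : ℝ :=
  (μ (Icc 0 x)).toReal

/-- A function `L : (0,∞) → (0,∞)` is slowly varying at infinity if
`L(λx)/L(x) → 1` as `x → ∞` for every `λ > 0`. -/
def SlowlyVarying (L : ℝ → ℝ) : Prop :=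
  ∀ lam : ℝ, 0 < lam → Tendsto (fun x => L (lam * x) / L x) atTop (𝓝 1)

lemma abs_sin_nat_mul_le (n : ℕ) (θ : ℝ) : |Real.sin (n * θ)| ≤ n * |Real.sin θ| := by
  induction n with
  | zero => simp
  | succ m ih =>
    have : ((m : ℝ) + 1) * θ = m * θ + θ := by ring
    push_cast
    rw [this, Real.sin_add]
    calc |Real.sin (m*θ) * Real.cos θ + Real.cos (m*θ) * Real.sin θ|
        ≤ |Real.sin (m*θ) * Real.cos θ| + |Real.cos (m*θ) * Real.sin θ| := abs_add_le _ _
      _ ≤ |Real.sin (m*θ)| * 1 + 1 * |Real.sin θ| := by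
          rw [abs_mul, abs_mul]
          gcongr ?_ * ?_ + ?_ * ?_ <;> first | exact Real.abs_cos_le_one _ | exact le_refl _
      _ ≤ (m:ℝ) * |Real.sin θ| + 1 * |Real.sin θ| := by
          rw [mul_one]; gcongr
      _ = ((m:ℝ)+1) * |Real.sin θ| := by ring

lemma fejer_nonneg (n : ℕ) (y : ℝ) : 0 ≤ fejerKernel n y := by
  unfold fejerKernel; split <;> positivity

lemma fejer_measurable (n : ℕ) : Measurable (fejerKernel n) := by
  unfold fejerKernel
  exact Measurable.ite (measurableSet_eq) measurable_const
    (((Real.measurable_sin.comp ((measurable_id.const_mul _).div_const 2)).pow_const 2).div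
      ((Real.measurable_sin.comp (measurable_id.div_const 2)).pow_const 2))

lemma sin_half_pos {y : ℝ} (h0 : 0 < y) (hpi : y ≤ Real.pi) : 0 < Real.sin (y / 2) :=
  Real.sin_pos_of_pos_of_lt_pi (by linarith) (by nlinarith [Real.pi_pos])

lemma fejer_le_sq (n : ℕ) {y : ℝ} (h0 : 0 ≤ y) (hpi : y ≤ Real.pi) :
    fejerKernel n y ≤ (n : ℝ) ^ 2 := by
  unfold fejerKernel
  split
  · exact le_refl _
  case isFalse h =>
    have hy : 0 < y := lt_of_le_of_ne h0 (Ne.symm h)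
    have hs := sin_half_pos hy hpi
    rw [div_le_iff₀ (by positivity)]
    have := abs_sin_nat_mul_le n (y/2)
    have h2 : Real.sin (n * y / 2) ^ 2 ≤ ((n:ℝ) * |Real.sin (y/2)|)^2 := by
      rw [← sq_abs]
      apply pow_le_pow_left₀ (abs_nonneg _)
      rw [show (n:ℝ) * y / 2 = n * (y/2) by ring]
      exact this
    calc Real.sin (n * y / 2) ^ 2 ≤ ((n:ℝ) * |Real.sin (y/2)|)^2 := h2
      _ = (n:ℝ)^2 * Real.sin (y/2)^2 := by rw [mul_pow, sq_abs]

lemma fejer_le_pi_div (n : ℕ) {y : ℝ} (h0 : 0 < y) (hpi : y ≤ Real.pi) :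
    fejerKernel n y ≤ Real.pi ^ 2 / y ^ 2 := by
  unfold fejerKernel
  rw [if_neg h0.ne']
  have hs := sin_half_pos h0 hpi
  have hjordan : y / Real.pi ≤ Real.sin (y / 2) := by
    have := Real.mul_le_sin (x := y/2) (by linarith) (by linarith)
    calc y / Real.pi = 2 / Real.pi * (y/2) := by ring
      _ ≤ Real.sin (y/2) := this
  have hyp : 0 < y / Real.pi := div_pos h0 Real.pi_pos
  have h1 : (y / Real.pi)^2 ≤ Real.sin (y/2)^2 := by
    apply pow_le_pow_left₀ hyp.le hjordan
  calc Real.sin (n * y / 2) ^ 2 / Real.sin (y / 2) ^ 2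
      ≤ 1 / (y/Real.pi)^2 := by
        apply div_le_div₀ (by norm_num) _ (by positivity) h1
        rw [← sq_abs]
        exact pow_le_one₀ (abs_nonneg _) (Real.abs_sin_le_one _)
    _ = Real.pi ^2 / y^2 := by
        rw [div_pow, one_div_div]

lemma uct (f : ℝ → ℝ) (hf : Measurable f)
    (h : ∀ t ∈ Icc (0:ℝ) 2, Tendsto (fun x => f (x + t) - f x) atTop (𝓝 0)) :
    ∀ ε > (0:ℝ), ∃ X : ℝ, ∀ x ≥ X, ∀ t ∈ Icc (0:ℝ) 1, |f (x + t) - f x| ≤ ε := by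
  intro ε hε
  by_contra hcon
  push_neg at hcon
  choose xf hxf tf htf hviol using hcon
  set xs : ℕ → ℝ := fun n => xf n with hxs
  set ts : ℕ → ℝ := fun n => tf n with hts
  have hxs_tendsto : Tendsto xs atTop atTop :=
    tendsto_atTop_mono (fun n => hxf (n:ℝ)) tendsto_natCast_atTop_atTop
  set ys : ℕ → ℝ := fun n => xs n + ts n with hys
  have hys_tendsto : Tendsto ys atTop atTop := by
    apply tendsto_atTop_mono (fun n => ?_) hxs_tendsto
    have := (htf (n:ℝ)).1
    simp only [hys]; linarith
  set g1 : ℕ → ℝ → ℝ := fun n u => f (xs n + u) - f (xs n) with hg1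
  set g2 : ℕ → ℝ → ℝ := fun n u => f (ys n + u) - f (ys n) with hg2
  have hg1m : ∀ n, StronglyMeasurable (g1 n) := fun n =>
    ((hf.comp (measurable_const.add measurable_id)).sub measurable_const).stronglyMeasurable
  have hg2m : ∀ n, StronglyMeasurable (g2 n) := fun n =>
    ((hf.comp (measurable_const.add measurable_id)).sub measurable_const).stronglyMeasurable
  set s : Set ℝ := Icc (0:ℝ) 2 with hsdef
  have hsm : MeasurableSet s := measurableSet_Icc
  have hsvol : volume s = ENNReal.ofReal 2 := by simp [hsdef, Real.volume_Icc]
  have hsfin : volume s ≠ ⊤ := by rw [hsvol]; exact ENNReal.ofReal_ne_top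
  have hptw1 : ∀ᵐ u ∂(volume : Measure ℝ), u ∈ s →
      Tendsto (fun n => g1 n u) atTop (𝓝 ((fun _ => (0:ℝ)) u)) := by
    refine Eventually.of_forall (fun u hu => ?_)
    exact (h u hu).comp hxs_tendsto
  have hptw2 : ∀ᵐ u ∂(volume : Measure ℝ), u ∈ s →
      Tendsto (fun n => g2 n u) atTop (𝓝 ((fun _ => (0:ℝ)) u)) := by
    refine Eventually.of_forall (fun u hu => ?_)
    exact (h u hu).comp hys_tendsto
  obtain ⟨t₁, ht₁s, ht₁m, ht₁vol, ht₁unif⟩ :=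
    tendstoUniformlyOn_of_ae_tendsto hg1m stronglyMeasurable_const hsm hsfin hptw1
      (by norm_num : (0:ℝ) < 1/8)
  obtain ⟨t₂, ht₂s, ht₂m, ht₂vol, ht₂unif⟩ :=
    tendstoUniformlyOn_of_ae_tendsto hg2m stronglyMeasurable_const hsm hsfin hptw2
      (by norm_num : (0:ℝ) < 1/8)
  set S : Set ℝ := s \ (t₁ ∪ t₂) with hSdef
  have hSsub1 : S ⊆ s \ t₁ := fun u hu => ⟨hu.1, fun h' => hu.2 (Or.inl h')⟩
  have hSsub2 : S ⊆ s \ t₂ := fun u hu => ⟨hu.1, fun h' => hu.2 (Or.inr h')⟩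
  have hSvol : ENNReal.ofReal (7/4) ≤ volume S := by
    have hsub : t₁ ∪ t₂ ⊆ s := union_subset ht₁s ht₂s
    have hfin : volume (t₁ ∪ t₂) ≠ ⊤ :=
      (lt_of_le_of_lt (measure_mono hsub) (lt_of_le_of_ne le_top hsfin)).ne
    have hdiff : volume S = volume s - volume (t₁ ∪ t₂) :=
      measure_diff hsub (ht₁m.union ht₂m).nullMeasurableSet hfin
    have hUvol : volume (t₁ ∪ t₂) ≤ ENNReal.ofReal (1/4) := by
      calc volume (t₁ ∪ t₂) ≤ volume t₁ + volume t₂ := measure_union_le _ _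
        _ ≤ ENNReal.ofReal (1/8) + ENNReal.ofReal (1/8) := add_le_add ht₁vol ht₂vol
        _ = ENNReal.ofReal (1/4) := by rw [← ENNReal.ofReal_add] <;> norm_num
    rw [hdiff, hsvol]
    calc ENNReal.ofReal (7/4) = ENNReal.ofReal 2 - ENNReal.ofReal (1/4) := by
          rw [← ENNReal.ofReal_sub] <;> norm_num
      _ ≤ ENNReal.ofReal 2 - volume (t₁ ∪ t₂) := tsub_le_tsub_left hUvol _
  -- uniform smallness
  rw [Metric.tendstoUniformlyOn_iff] at ht₁unif ht₂unif
  obtain ⟨N₁, hN₁⟩ := (ht₁unif (ε/2) (by linarith)).exists_forall_of_atTop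
  obtain ⟨N₂, hN₂⟩ := (ht₂unif (ε/2) (by linarith)).exists_forall_of_atTop
  set n := max N₁ N₂ with hn
  -- translation intersection nonempty
  have hshift : volume ((ts n) +ᵥ S) = volume S := measure_vadd _ _ _
  have hts01 : ts n ∈ Icc (0:ℝ) 1 := htf _
  have hint : (S ∩ ((ts n) +ᵥ S)).Nonempty := by
    by_contra hempty
    rw [not_nonempty_iff_eq_empty] at hempty
    have hdisj : Disjoint S ((ts n) +ᵥ S) := disjoint_iff_inter_eq_empty.2 hempty
    have hcup : S ∪ ((ts n) +ᵥ S) ⊆ Icc (0:ℝ) 3 := by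
      rintro u (hu | hu)
      · exact ⟨hu.1.1, by linarith [hu.1.2]⟩
      · obtain ⟨v, hv, rfl⟩ := hu
        have hv' := hv.1
        constructor
        · simp only [vadd_eq_add]; linarith [hv'.1, hts01.1]
        · simp only [vadd_eq_add]; linarith [hv'.2, hts01.2]
    have h1 : volume (S ∪ ((ts n) +ᵥ S)) ≤ ENNReal.ofReal 3 := by
      calc volume (S ∪ _) ≤ volume (Icc (0:ℝ) 3) := measure_mono hcup
        _ = ENNReal.ofReal 3 := by simp [Real.volume_Icc]
    have h2 : volume (S ∪ ((ts n) +ᵥ S)) = volume S + volume ((ts n) +ᵥ S) :=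
      measure_union hdisj ((hsm.diff (ht₁m.union ht₂m)).const_vadd _)
    have h3 : ENNReal.ofReal (7/4) + ENNReal.ofReal (7/4) ≤ ENNReal.ofReal 3 := by
      rw [h2] at h1
      exact le_trans (add_le_add hSvol (hshift ▸ hSvol)) h1
    rw [← ENNReal.ofReal_add (by norm_num) (by norm_num)] at h3
    have := ENNReal.ofReal_le_ofReal_iff (by norm_num : (0:ℝ) ≤ 3) |>.1 h3
    linarith
  obtain ⟨u, huS, hu2⟩ := hint
  obtain ⟨v, hvS, hveq⟩ := hu2
  have hveq' : u = ts n + v := hveq.symm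
  have hd1 : dist ((0:ℝ)) (g1 n u) < ε/2 := hN₁ n (le_max_left _ _) u (hSsub1 huS)
  have hd2 : dist ((0:ℝ)) (g2 n v) < ε/2 := hN₂ n (le_max_right _ _) v (hSsub2 hvS)
  rw [dist_comm, Real.dist_eq, sub_zero] at hd1 hd2
  have hkey : f (xs n + ts n) - f (xs n) = g1 n u - g2 n v := by
    simp only [hg1, hg2, hys, hveq']
    ring_nf
  have : |f (xs n + ts n) - f (xs n)| < ε := by
    rw [hkey]
    calc |g1 n u - g2 n v| ≤ |g1 n u| + |g2 n v| := abs_sub _ _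
      _ < ε/2 + ε/2 := add_lt_add hd1 hd2
      _ = ε := by ring
  exact absurd this (not_lt.2 (hviol (n:ℝ)).le)

lemma potter (L : ℝ → ℝ) (hLmeas : Measurable L) (hLpos : ∀ x > (0:ℝ), 0 < L x)
    (hL : SlowlyVarying L) (ε : ℝ) (hε : 0 < ε) :
    ∃ A ≥ (1:ℝ), ∃ x₀ ≥ (1:ℝ), ∀ y x : ℝ, x₀ ≤ y → y ≤ x →
      L y ≤ A * (x / y) ^ ε * L x ∧ L x ≤ A * (x / y) ^ ε * L y := by
  set f : ℝ → ℝ := fun u => Real.log (L (Real.exp u)) with hfdef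
  have hfm : Measurable f := Real.measurable_log.comp (hLmeas.comp Real.measurable_exp)
  have hconv : ∀ t ∈ Icc (0:ℝ) 2, Tendsto (fun x => f (x + t) - f x) atTop (𝓝 0) := by
    intro t _
    have h1 : Tendsto (fun u => L (Real.exp t * Real.exp u) / L (Real.exp u)) atTop (𝓝 1) :=
      (hL (Real.exp t) (Real.exp_pos t)).comp Real.tendsto_exp_atTop
    have h2 : Tendsto (fun u => Real.log (L (Real.exp t * Real.exp u) / L (Real.exp u)))
        atTop (𝓝 0) := by
      have := (Real.continuousAt_log one_ne_zero).tendsto.comp h1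
      simpa [Function.comp_def] using this
    refine h2.congr (fun u => ?_)
    have hnum : (0:ℝ) < L (Real.exp t * Real.exp u) := by
      apply hLpos; positivity
    have hden : (0:ℝ) < L (Real.exp u) := hLpos _ (Real.exp_pos u)
    rw [Real.log_div hnum.ne' hden.ne']
    simp only [hfdef]
    rw [← Real.exp_add, add_comm t u]
  obtain ⟨X, hX⟩ := uct f hfm hconv ε hε
  -- chain bound
  have hchain : ∀ m : ℕ, ∀ a ≥ X, ∀ t : ℝ, (m:ℝ) ≤ t → t ≤ (m:ℝ) + 1 →
      |f (a + t) - f a| ≤ ((m:ℝ) + 1) * ε := by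
    intro m
    induction m with
    | zero =>
      intro a ha t ht0 ht1
      simpa using hX a ha t ⟨by simpa using ht0, by simpa using ht1⟩
    | succ k ih =>
      intro a ha t ht0 ht1
      push_cast at ht0 ht1 ⊢
      have key : f (a + t) - f a = (f ((a+1) + (t-1)) - f (a+1)) + (f (a+1) - f a) := by
        have : (a+1) + (t-1) = a + t := by ring
        rw [this]; ring
      have h1 : |f ((a+1) + (t-1)) - f (a+1)| ≤ ((k:ℝ) + 1) * ε := by
        apply ih (a+1) (by linarith) (t-1) (by linarith) (by push_cast; linarith)
      have h2 : |f (a+1) - f a| ≤ ε := by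
        simpa using hX a ha 1 ⟨by norm_num, le_refl 1⟩
      calc |f (a + t) - f a| ≤ |f ((a+1) + (t-1)) - f (a+1)| + |f (a+1) - f a| := by
            rw [key]; exact abs_add_le _ _
        _ ≤ ((k:ℝ) + 1) * ε + ε := add_le_add h1 h2
        _ = ((k:ℝ) + 1 + 1) * ε := by ring
  have hband : ∀ a ≥ X, ∀ t ≥ (0:ℝ), |f (a + t) - f a| ≤ (t + 1) * ε := by
    intro a ha t ht
    have h1 := hchain ⌊t⌋₊ a ha t (Nat.floor_le ht) (Nat.lt_floor_add_one t).le
    calc |f (a + t) - f a| ≤ ((⌊t⌋₊:ℝ) + 1) * ε := h1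
      _ ≤ (t + 1) * ε := by
        have := Nat.floor_le ht
        nlinarith
  refine ⟨Real.exp ε, Real.one_le_exp hε.le, max (Real.exp X) 1, le_max_right _ _, ?_⟩
  intro y x hy hyx
  have hy1 : (1:ℝ) ≤ y := le_trans (le_max_right _ _) hy
  have hy0 : (0:ℝ) < y := lt_of_lt_of_le one_pos hy1
  have hx0 : (0:ℝ) < x := lt_of_lt_of_le hy0 hyx
  have ha : Real.log y ≥ X := by
    rw [ge_iff_le, Real.le_log_iff_exp_le hy0]
    exact le_trans (le_max_left _ _) hy
  have ht : Real.log x - Real.log y ≥ 0 := by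
    have := Real.log_le_log hy0 hyx
    linarith
  have hb := hband (Real.log y) ha (Real.log x - Real.log y) ht
  have hxy : Real.log y + (Real.log x - Real.log y) = Real.log x := by ring
  rw [hxy] at hb
  have hfx : f (Real.log x) = Real.log (L x) := by
    simp only [hfdef]; rw [Real.exp_log hx0]
  have hfy : f (Real.log y) = Real.log (L y) := by
    simp only [hfdef]; rw [Real.exp_log hy0]
  rw [hfx, hfy] at hb
  rw [abs_le] at hb
  have hLx : (0:ℝ) < L x := hLpos _ hx0
  have hLy : (0:ℝ) < L y := hLpos _ hy0
  have hrpow : ((x / y) ^ ε : ℝ) = Real.exp (ε * Real.log (x/y)) := by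
    rw [Real.rpow_def_of_pos (div_pos hx0 hy0), mul_comm]
  have hlogdiv : Real.log (x/y) = Real.log x - Real.log y := Real.log_div hx0.ne' hy0.ne'
  constructor
  · have h1 : Real.log (L y) ≤ Real.log (L x) + ((Real.log x - Real.log y) + 1) * ε := by
      linarith [hb.1]
    calc L y = Real.exp (Real.log (L y)) := (Real.exp_log hLy).symm
      _ ≤ Real.exp (Real.log (L x) + ((Real.log x - Real.log y) + 1) * ε) :=
          Real.exp_le_exp.2 h1
      _ = Real.exp (Real.log (L x)) * Real.exp (ε * (Real.log x - Real.log y)) * Real.exp ε := by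
          rw [← Real.exp_add, ← Real.exp_add]; congr 1; ring
      _ = Real.exp ε * (x/y)^ε * L x := by rw [hrpow, hlogdiv, Real.exp_log hLx]; ring
  · have h1 : Real.log (L x) ≤ Real.log (L y) + ((Real.log x - Real.log y) + 1) * ε := by
      linarith [hb.2]
    calc L x = Real.exp (Real.log (L x)) := (Real.exp_log hLx).symm
      _ ≤ Real.exp (Real.log (L y) + ((Real.log x - Real.log y) + 1) * ε) :=
          Real.exp_le_exp.2 h1
      _ = Real.exp (Real.log (L y)) * Real.exp (ε * (Real.log x - Real.log y)) * Real.exp ε := by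
          rw [← Real.exp_add, ← Real.exp_add]; congr 1; ring
      _ = Real.exp ε * (x/y)^ε * L y := by rw [hrpow, hlogdiv, Real.exp_log hLy]; ring

lemma exists_dyadic {z : ℝ} (hz : 1 ≤ z) : ∃ k : ℕ, (2:ℝ)^k ≤ z ∧ z < 2^(k+1) := by
  have hex : ∃ m : ℕ, z < 2^m := pow_unbounded_of_one_lt z one_lt_two
  classical
  have hm₀ : z < 2^(Nat.find hex) := Nat.find_spec hex
  have hne : Nat.find hex ≠ 0 := by
    intro h
    rw [h] at hm₀
    simp at hm₀
    linarith
  obtain ⟨k, hk⟩ := Nat.exists_eq_succ_of_ne_zero hne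
  refine ⟨k, ?_, by rw [← Nat.succ_eq_add_one, ← hk]; exact hm₀⟩
  have := Nat.find_min hex (m := k) (by omega)
  push_neg at this
  exact this

lemma arith1 {p q C A Ln γ : ℝ} (hp : 0 < p) (hq : 0 < q)
    (hγ1 : 0 < γ) (hγ2 : γ < 2) (hC : 0 ≤ C) (hA : 0 ≤ A) (hLn : 0 ≤ Ln) :
    Real.pi^2/(q/p)^2 * (C * (2*q/p)^(2-γ) * (A * (2*q)^(γ/2) * Ln)) ≤
      (4*Real.pi^2*C*A) * (p^γ * Ln) * q^(-(γ/2)) := by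
  have h2q : (2*q/p)^(2-γ) = (2:ℝ)^(2-γ) * q^(2-γ) * p^(-(2-γ)) := by
    rw [Real.div_rpow (by positivity) hp.le, Real.mul_rpow (by norm_num) hq.le,
      Real.rpow_neg hp.le, div_eq_mul_inv]
  have h2q2 : ((2:ℝ)*q)^(γ/2) = (2:ℝ)^(γ/2) * q^(γ/2) := Real.mul_rpow (by norm_num) hq.le
  have hcp : p^(2:ℕ) * p^(-(2-γ)) = p^γ := by
    rw [← Real.rpow_natCast p 2, ← Real.rpow_add hp]
    norm_num
  have hcq : q^(2-γ) * q^(γ/2) / q^(2:ℕ) = q^(-(γ/2)) := by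
    rw [← Real.rpow_natCast q 2, ← Real.rpow_add hq, div_eq_mul_inv, ← Real.rpow_neg hq.le,
      ← Real.rpow_add hq]
    congr 1
    ring
  have hc2 : (2:ℝ)^(2-γ) * (2:ℝ)^(γ/2) = (2:ℝ)^(2-γ/2) := by
    rw [← Real.rpow_add (by norm_num : (0:ℝ) < 2)]
    congr 1
    ring
  have hle4 : (2:ℝ)^(2-γ/2) ≤ 4 := by
    have : (2:ℝ)^(2-γ/2) ≤ (2:ℝ)^(2:ℝ) :=
      Real.rpow_le_rpow_of_exponent_le (by norm_num) (by linarith)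
    have h4 : (2:ℝ)^(2:ℝ) = 4 := by
      rw [show (2:ℝ) = ((2:ℕ):ℝ) by norm_num, Real.rpow_natCast]
      norm_num
    linarith
  calc Real.pi^2/(q/p)^2 * (C * (2*q/p)^(2-γ) * (A * (2*q)^(γ/2) * Ln))
      = (Real.pi^2*C*A*Ln) * ((2:ℝ)^(2-γ)*(2:ℝ)^(γ/2)) *
          ((p^(2:ℕ) * p^(-(2-γ))) * (q^(2-γ) * q^(γ/2) / q^(2:ℕ))) := by
        rw [h2q, h2q2]
        have hqp : Real.pi^2/(q/p)^2 = Real.pi^2 * p^(2:ℕ)/q^(2:ℕ) := by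
          field_simp
        rw [hqp]
        ring
    _ = (Real.pi^2*C*A*Ln) * ((2:ℝ)^(2-γ/2)) * (p^γ * q^(-(γ/2))) := by
        rw [hcp, hcq, hc2]
    _ ≤ (Real.pi^2*C*A*Ln) * 4 * (p^γ * q^(-(γ/2))) := by
        gcongr
    _ = (4*Real.pi^2*C*A) * (p^γ * Ln) * q^(-(γ/2)) := by ring

/-- If `G(x) ≤ C x^{2-γ} L(1/x)` on `(0,π]`, then `V(n) ≤ C' n^γ L(n)` for all `n ≥ 1`. -/
theorem variance_upper_of_spectral_upper (μ : Measure ℝ) [IsFiniteMeasure μ]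
    (hsupp : μ (Icc 0 Real.pi)ᶜ = 0)
    (γ : ℝ) (hγ : γ ∈ Ioo (0 : ℝ) 2)
    (L : ℝ → ℝ) (hLmeas : Measurable L) (hLpos : ∀ x > (0 : ℝ), 0 < L x)
    (hL : SlowlyVarying L)
    (hG : ∃ C > (0 : ℝ), ∀ x : ℝ, 0 < x → x ≤ Real.pi →
      specG μ x ≤ C * x ^ (2 - γ) * L (1 / x)) :
    ∃ C' > (0 : ℝ), ∀ n : ℕ, 1 ≤ n → varV μ n ≤ C' * (n : ℝ) ^ γ * L n := by
  obtain ⟨C, hC, hGb⟩ := hG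
  obtain ⟨hγ1, hγ2⟩ := hγ
  obtain ⟨A, hA1, x₀, hx₀1, hpot⟩ := potter L hLmeas hLpos hL (γ/2) (by linarith)
  have hA0 : (0:ℝ) < A := lt_of_lt_of_le one_pos hA1
  have hx₀0 : (0:ℝ) < x₀ := lt_of_lt_of_le one_pos hx₀1
  have hπ : (0:ℝ) < Real.pi := Real.pi_pos
  set M : ℝ := specG μ Real.pi with hMdef
  have hM0 : 0 ≤ M := ENNReal.toReal_nonneg
  have hμIcc : μ (Icc 0 Real.pi) = ENNReal.ofReal M :=
    (ENNReal.ofReal_toReal (measure_ne_top μ _)).symm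
  set r : ℝ := (2:ℝ)^(-(γ/2)) with hrdef
  have hr0 : 0 < r := Real.rpow_pos_of_pos (by norm_num) _
  have hr1 : r < 1 := Real.rpow_lt_one_of_one_lt_of_neg (by norm_num) (by linarith)
  set s' : ℝ := (1 - r)⁻¹ with hs'def
  have hs'0 : 0 < s' := inv_pos.2 (by linarith)
  set D₁ : ℝ := 4*Real.pi^2*C*A with hD₁def
  have hD₁0 : 0 < D₁ := by positivity
  set D₂ : ℝ := 4 + 4*Real.pi^2*x₀^2 with hD₂def
  have hD₂0 : 0 < D₂ := by positivity
  -- uniform lower bound on n^γ L n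
  have hc₀ : ∃ c₀ > (0:ℝ), ∀ n : ℕ, 1 ≤ n → c₀ ≤ (n:ℝ)^γ * L n := by
    set N := ⌈x₀⌉₊ with hNdef
    have hN1 : 1 ≤ N := Nat.one_le_ceil_iff.2 hx₀0
    have hne : (Finset.Icc 1 N).Nonempty := ⟨1, Finset.mem_Icc.2 ⟨le_refl 1, hN1⟩⟩
    set c₂ := (Finset.Icc 1 N).inf' hne (fun m => (m:ℝ)^γ * L m) with hc₂def
    have hc₂0 : 0 < c₂ := by
      rw [hc₂def, Finset.lt_inf'_iff]
      intro m hm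
      have hm1 : 1 ≤ m := (Finset.mem_Icc.1 hm).1
      have hm0 : (0:ℝ) < m := by exact_mod_cast hm1
      exact mul_pos (Real.rpow_pos_of_pos hm0 γ) (hLpos _ hm0)
    have hLx₀ : 0 < L x₀ := hLpos _ hx₀0
    refine ⟨min (L x₀ / A) c₂, lt_min (by positivity) hc₂0, ?_⟩
    intro n hn
    have hn0 : (0:ℝ) < n := by exact_mod_cast hn
    rcases le_or_gt x₀ (n:ℝ) with hcase | hcase
    · -- use Potter
      have hkey := (hpot x₀ (n:ℝ) (le_refl _) hcase).1
      have hhalf : (0:ℝ) ≤ γ/2 := by linarith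
      have hratio : ((n:ℝ)/x₀)^(γ/2) ≤ (n:ℝ)^(γ/2) := by
        apply Real.rpow_le_rpow (by positivity) _ hhalf
        exact div_le_self hn0.le hx₀1
      have h1 : L x₀ ≤ A * (n:ℝ)^(γ/2) * L n := by
        have hLn : 0 < L n := hLpos _ hn0
        calc L x₀ ≤ A * ((n:ℝ)/x₀)^(γ/2) * L n := hkey
          _ ≤ A * (n:ℝ)^(γ/2) * L n := by gcongr
      have h2 : L x₀ / A ≤ (n:ℝ)^(γ/2) * L n := by
        rw [div_le_iff₀ hA0]
        calc L x₀ ≤ A * (n:ℝ)^(γ/2) * L n := h1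
          _ = (n:ℝ)^(γ/2) * L n * A := by ring
      have h3 : (1:ℝ) ≤ (n:ℝ)^(γ/2) := by
        apply Real.one_le_rpow (by exact_mod_cast hn) hhalf
      have h4 : (n:ℝ)^γ = (n:ℝ)^(γ/2) * (n:ℝ)^(γ/2) := by
        rw [← Real.rpow_add hn0]; congr 1; ring
      have hLn : 0 < L n := hLpos _ hn0
      calc min (L x₀ / A) c₂ ≤ L x₀ / A := min_le_left _ _
        _ ≤ (n:ℝ)^(γ/2) * L n := h2
        _ ≤ (n:ℝ)^(γ/2) * ((n:ℝ)^(γ/2) * L n) := by nlinarith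
        _ = (n:ℝ)^γ * L n := by rw [h4]; ring
    · -- small n, use finite min
      have hnN : n ≤ N := by
        have := Nat.le_ceil x₀
        have : (n:ℝ) ≤ (N:ℝ) := by
          rw [hNdef]; exact le_trans hcase.le (Nat.le_ceil x₀)
        exact_mod_cast this
      calc min (L x₀ / A) c₂ ≤ c₂ := min_le_right _ _
        _ ≤ (n:ℝ)^γ * L n := Finset.inf'_le _ (Finset.mem_Icc.2 ⟨hn, hnN⟩)
  obtain ⟨c₀, hc₀0, hc₀le⟩ := hc₀
  refine ⟨C + D₁ * s' + D₂ * M / c₀, ?_, ?_⟩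
  · have : 0 ≤ D₂ * M / c₀ := div_nonneg (mul_nonneg hD₂0.le hM0) hc₀0.le
    have : 0 < C + D₁ * s' := by positivity
    linarith
  intro n hn
  have hn0 : (0:ℝ) < n := by exact_mod_cast hn
  have hLn0 : 0 < L n := hLpos _ hn0
  have hrpn : (0:ℝ) ≤ (n:ℝ)^γ := Real.rpow_nonneg hn0.le γ
  have h1n : (1:ℝ)/n ≤ 1 := by rw [div_le_one hn0]; exact_mod_cast hn
  have h1π : 1/(n:ℝ) ≤ Real.pi := le_trans h1n (by linarith [Real.pi_gt_three])
  have hinvn0 : (0:ℝ) < 1/(n:ℝ) := by positivity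
  -- head bound
  have hid : (n:ℝ)^(2:ℕ) * (C * ((1:ℝ)/(n:ℝ))^(2-γ) * L ((n:ℝ))) = C * (n:ℝ)^γ * L n := by
    rw [one_div, ← Real.rpow_natCast (n:ℝ) 2, Real.inv_rpow hn0.le, ← Real.rpow_neg hn0.le]
    rw [show (n:ℝ)^((2:ℕ):ℝ) * (C * (n:ℝ)^(-(2-γ)) * L n)
        = C * ((n:ℝ)^((2:ℕ):ℝ) * (n:ℝ)^(-(2-γ))) * L n from by ring]
    rw [← Real.rpow_add hn0]
    norm_num
  have hhead : ∫⁻ y in Icc 0 (1/(n:ℝ)), ENNReal.ofReal (fejerKernel n y) ∂μ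
      ≤ ENNReal.ofReal (C * (n:ℝ)^γ * L n) := by
    calc ∫⁻ y in Icc 0 (1/(n:ℝ)), ENNReal.ofReal (fejerKernel n y) ∂μ
        ≤ ∫⁻ _ in Icc 0 (1/(n:ℝ)), ENNReal.ofReal ((n:ℝ)^(2:ℕ)) ∂μ := by
          apply setLIntegral_mono measurable_const
          intro y hy
          exact ENNReal.ofReal_le_ofReal (fejer_le_sq n hy.1 (le_trans hy.2 h1π))
      _ = ENNReal.ofReal ((n:ℝ)^(2:ℕ)) * μ (Icc 0 (1/(n:ℝ))) := setLIntegral_const _ _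
      _ = ENNReal.ofReal ((n:ℝ)^(2:ℕ)) * ENNReal.ofReal (specG μ (1/(n:ℝ))) := by
          rw [specG, ENNReal.ofReal_toReal (measure_ne_top μ _)]
      _ ≤ ENNReal.ofReal ((n:ℝ)^(2:ℕ)) * ENNReal.ofReal (C * ((1:ℝ)/(n:ℝ))^(2-γ) * L (1/(1/(n:ℝ)))) := by
          gcongr
          exact hGb _ hinvn0 h1π
      _ = ENNReal.ofReal (C * (n:ℝ)^γ * L n) := by
          rw [one_div_one_div, ← ENNReal.ofReal_mul (by positivity), hid]
  -- tail setup
  set a : ℕ → ℝ := fun k => (2:ℝ)^k / n with hadef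
  have ha0 : ∀ k, 0 < a k := fun k => by simp only [hadef]; positivity
  set sk : ℕ → Set ℝ := fun k => Ico (a k) (a (k+1)) ∩ Ioc (1/(n:ℝ)) Real.pi with hskdef
  have hskm : ∀ k, MeasurableSet (sk k) := fun k => measurableSet_Ico.inter measurableSet_Ioc
  have hsksub : ∀ k, sk k ⊆ Icc 0 Real.pi := fun k y hy =>
    ⟨le_trans hinvn0.le hy.2.1.le, hy.2.2⟩
  have hcover : Ioc (1/(n:ℝ)) Real.pi ⊆ ⋃ k, sk k := by
    intro y hy
    have hy0 : 0 < y := lt_trans hinvn0 hy.1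
    have h1 : 1 ≤ (n:ℝ) * y := by
      have h := (div_lt_iff₀ hn0).1 hy.1
      rw [mul_comm] at h
      linarith
    obtain ⟨k, hk1, hk2⟩ := exists_dyadic h1
    refine mem_iUnion.2 ⟨k, ⟨⟨?_, ?_⟩, hy⟩⟩
    · simp only [hadef]
      rw [div_le_iff₀ hn0, mul_comm]
      exact hk1
    · simp only [hadef]
      rw [lt_div_iff₀ hn0, mul_comm]
      exact hk2
  have hdisj : Pairwise (Function.onFun Disjoint sk) := by
    have key : ∀ i j : ℕ, i < j → Disjoint (sk i) (sk j) := by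
      intro i j hij
      rw [Set.disjoint_left]
      rintro x ⟨⟨_, hx2⟩, _⟩ ⟨⟨hx3, _⟩, _⟩
      have hmono : a (i+1) ≤ a j := by
        simp only [hadef]
        gcongr
        · norm_num
        · omega
      have : x < x := lt_of_lt_of_le hx2 (le_trans hmono hx3)
      exact lt_irrefl x this
    intro i j hij
    rcases lt_or_gt_of_ne hij with h | h
    · exact key i j h
    · exact (key j i h).symm
  -- per-k bound
  have hterm : ∀ k : ℕ, ∫⁻ y in sk k, ENNReal.ofReal (fejerKernel n y) ∂μ
      ≤ ENNReal.ofReal (D₁ * ((n:ℝ)^γ * L n) * r^k) + ENNReal.ofReal D₂ * μ (sk k) := by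
    intro k
    have hak0 : 0 < a k := ha0 k
    have hak10 : 0 < a (k+1) := ha0 (k+1)
    have hbound1 : ∫⁻ y in sk k, ENNReal.ofReal (fejerKernel n y) ∂μ
        ≤ ENNReal.ofReal (Real.pi^2/(a k)^2) * μ (sk k) := by
      calc ∫⁻ y in sk k, ENNReal.ofReal (fejerKernel n y) ∂μ
          ≤ ∫⁻ _ in sk k, ENNReal.ofReal (Real.pi^2/(a k)^2) ∂μ := by
            apply setLIntegral_mono measurable_const
            intro y hy
            apply ENNReal.ofReal_le_ofReal
            have hy0 : 0 < y := lt_trans hinvn0 hy.2.1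
            calc fejerKernel n y ≤ Real.pi^2 / y^2 := fejer_le_pi_div n hy0 hy.2.2
              _ ≤ Real.pi^2/(a k)^2 := by
                  apply div_le_div_of_nonneg_left (by positivity) (by positivity)
                  exact pow_le_pow_left₀ hak0.le hy.1.1 2
        _ = ENNReal.ofReal (Real.pi^2/(a k)^2) * μ (sk k) := setLIntegral_const _ _
    by_cases hcase : x₀ ≤ (n:ℝ)/(2:ℝ)^(k+1) ∧ (2:ℝ)^(k+1)/(n:ℝ) ≤ Real.pi
    · -- main case
      obtain ⟨hc1, hc2⟩ := hcase
      have hak1π : a (k+1) ≤ Real.pi := by simp only [hadef]; exact hc2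
      have hμsk : μ (sk k) ≤ ENNReal.ofReal (C * (a (k+1))^(2-γ) * L ((n:ℝ)/(2:ℝ)^(k+1))) := by
        have hsub2 : sk k ⊆ Icc 0 (a (k+1)) := fun y hy => ⟨le_trans hak0.le hy.1.1, hy.1.2.le⟩
        calc μ (sk k) ≤ μ (Icc 0 (a (k+1))) := measure_mono hsub2
          _ = ENNReal.ofReal (specG μ (a (k+1))) := by
              rw [specG, ENNReal.ofReal_toReal (measure_ne_top μ _)]
          _ ≤ ENNReal.ofReal (C * (a (k+1))^(2-γ) * L ((n:ℝ)/(2:ℝ)^(k+1))) := by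
              apply ENNReal.ofReal_le_ofReal
              have := hGb (a (k+1)) hak10 hak1π
              rwa [show (1:ℝ)/(a (k+1)) = (n:ℝ)/(2:ℝ)^(k+1) from by
                simp only [hadef]; rw [one_div_div]] at this
      have h2k1 : (1:ℝ) ≤ (2:ℝ)^(k+1) := by
        calc (1:ℝ) = 1^(k+1) := (one_pow _).symm
          _ ≤ 2^(k+1) := pow_le_pow_left₀ (by norm_num) (by norm_num) _
      have hpk : (0:ℝ) < (2:ℝ)^(k+1) := by positivity
      have hyx : (n:ℝ)/(2:ℝ)^(k+1) ≤ (n:ℝ) := div_le_self hn0.le h2k1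
      have harg : (n:ℝ)/((n:ℝ)/(2:ℝ)^(k+1)) = (2:ℝ)^(k+1) := by
        field_simp
      have hL' : L ((n:ℝ)/(2:ℝ)^(k+1)) ≤ A * ((2:ℝ)^(k+1))^(γ/2) * L n := by
        have h := (hpot _ _ hc1 hyx).1
        rwa [harg] at h
      have hLy0 : (0:ℝ) < L ((n:ℝ)/(2:ℝ)^(k+1)) := hLpos _ (by positivity)
      have hq0 : (0:ℝ) < (2:ℝ)^k := by positivity
      have h2eq : (2:ℝ)^(k+1) = 2*(2:ℝ)^k := by rw [pow_succ]; ring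
      have hrk : ((2:ℝ)^k : ℝ)^(-(γ/2)) = r^k := by
        rw [hrdef, ← Real.rpow_natCast ((2:ℝ)^(-(γ/2))) k,
          ← Real.rpow_natCast (2:ℝ) k, ← Real.rpow_mul (by norm_num : (0:ℝ) ≤ 2),
          ← Real.rpow_mul (by norm_num : (0:ℝ) ≤ 2)]
        congr 1
        ring
      have hreal : Real.pi^2/(a k)^2 * (C * (a (k+1))^(2-γ) * L ((n:ℝ)/(2:ℝ)^(k+1)))
          ≤ D₁ * ((n:ℝ)^γ * L n) * r^k := by
        have harith := arith1 (p := (n:ℝ)) (q := (2:ℝ)^k) hn0 hq0 hγ1 hγ2 hC.le hA0.le hLn0.le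
        calc Real.pi^2/(a k)^2 * (C * (a (k+1))^(2-γ) * L ((n:ℝ)/(2:ℝ)^(k+1)))
            ≤ Real.pi^2/(a k)^2 * (C * (a (k+1))^(2-γ) * (A * ((2:ℝ)^(k+1))^(γ/2) * L n)) := by
              have hnn1 : (0:ℝ) ≤ Real.pi^2/(a k)^2 := by positivity
              have hnn2 : (0:ℝ) ≤ C * (a (k+1))^(2-γ) := by positivity
              gcongr
          _ = Real.pi^2/((2:ℝ)^k/(n:ℝ))^2 *
                (C * (2*(2:ℝ)^k/(n:ℝ))^(2-γ) * (A * (2*(2:ℝ)^k)^(γ/2) * L n)) := by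
              simp only [hadef, h2eq]
          _ ≤ (4*Real.pi^2*C*A) * ((n:ℝ)^γ * L n) * ((2:ℝ)^k : ℝ)^(-(γ/2)) := harith
          _ = D₁ * ((n:ℝ)^γ * L n) * r^k := by rw [hrk, hD₁def]
      calc ∫⁻ y in sk k, ENNReal.ofReal (fejerKernel n y) ∂μ
          ≤ ENNReal.ofReal (Real.pi^2/(a k)^2) * μ (sk k) := hbound1
        _ ≤ ENNReal.ofReal (Real.pi^2/(a k)^2) *
              ENNReal.ofReal (C * (a (k+1))^(2-γ) * L ((n:ℝ)/(2:ℝ)^(k+1))) := by gcongr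
        _ = ENNReal.ofReal (Real.pi^2/(a k)^2 *
              (C * (a (k+1))^(2-γ) * L ((n:ℝ)/(2:ℝ)^(k+1)))) :=
            (ENNReal.ofReal_mul (by positivity)).symm
        _ ≤ ENNReal.ofReal (D₁ * ((n:ℝ)^γ * L n) * r^k) := ENNReal.ofReal_le_ofReal hreal
        _ ≤ ENNReal.ofReal (D₁ * ((n:ℝ)^γ * L n) * r^k) + ENNReal.ofReal D₂ * μ (sk k) :=
            le_self_add
    · -- remainder case
      have hm : Real.pi^2/(a k)^2 ≤ D₂ := by
        rcases not_and_or.1 hcase with h1 | h2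
        · push_neg at h1
          have h2k : (0:ℝ) < (2:ℝ)^(k+1) := by positivity
          have hlow : 1/(2*x₀) ≤ a k := by
            simp only [hadef]
            rw [div_le_div_iff₀ (by positivity) hn0]
            have : (n:ℝ) < x₀ * (2:ℝ)^(k+1) := by
              have := (div_lt_iff₀ h2k).1 h1
              linarith
            rw [pow_succ] at this
            nlinarith
          calc Real.pi^2/(a k)^2 ≤ Real.pi^2/(1/(2*x₀))^2 := by
                apply div_le_div_of_nonneg_left (by positivity) (by positivity)
                exact pow_le_pow_left₀ (by positivity) hlow 2
            _ = 4*Real.pi^2*x₀^2 := by field_simp; ring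
            _ ≤ D₂ := by simp only [hD₂def]; linarith
        · push_neg at h2
          have hlow : Real.pi/2 ≤ a k := by
            simp only [hadef]
            rw [pow_succ] at h2
            rw [div_le_div_iff₀ (by norm_num) hn0]
            have := (lt_div_iff₀ hn0).1 h2
            linarith
          calc Real.pi^2/(a k)^2 ≤ Real.pi^2/(Real.pi/2)^2 := by
                apply div_le_div_of_nonneg_left (by positivity) (by positivity)
                exact pow_le_pow_left₀ (by positivity) hlow 2
            _ = 4 := by field_simp; ring
            _ ≤ D₂ := by
                have : (0:ℝ) ≤ 4*Real.pi^2*x₀^2 := by positivity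
                simp only [hD₂def]; linarith
      calc ∫⁻ y in sk k, ENNReal.ofReal (fejerKernel n y) ∂μ
          ≤ ENNReal.ofReal (Real.pi^2/(a k)^2) * μ (sk k) := hbound1
        _ ≤ ENNReal.ofReal D₂ * μ (sk k) := by
            gcongr
        _ ≤ ENNReal.ofReal (D₁ * ((n:ℝ)^γ * L n) * r^k) + ENNReal.ofReal D₂ * μ (sk k) :=
            self_le_add_left _ _
  -- sum the tail
  have htail : ∫⁻ y in Ioc (1/(n:ℝ)) Real.pi, ENNReal.ofReal (fejerKernel n y) ∂μ
      ≤ ENNReal.ofReal (D₁ * ((n:ℝ)^γ * L n) * s') + ENNReal.ofReal (D₂ * M) := by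
    have hsum1 : ∑' k : ℕ, ENNReal.ofReal (D₁ * ((n:ℝ)^γ * L n) * r^k)
        = ENNReal.ofReal (D₁ * ((n:ℝ)^γ * L n)) * ∑' k : ℕ, (ENNReal.ofReal r)^k := by
      rw [← ENNReal.tsum_mul_left]
      congr 1
      funext k
      rw [← ENNReal.ofReal_pow hr0.le, ← ENNReal.ofReal_mul (by positivity)]
    have hgeo : ∑' k : ℕ, (ENNReal.ofReal r)^k = ENNReal.ofReal s' := by
      rw [ENNReal.tsum_geometric, hs'def, ENNReal.ofReal_inv_of_pos (by linarith),
        ENNReal.ofReal_sub _ hr0.le, ENNReal.ofReal_one]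
    have hsum2 : ∑' k : ℕ, ENNReal.ofReal D₂ * μ (sk k) ≤ ENNReal.ofReal (D₂ * M) := by
      rw [ENNReal.tsum_mul_left, ← measure_iUnion hdisj hskm]
      calc ENNReal.ofReal D₂ * μ (⋃ k, sk k)
          ≤ ENNReal.ofReal D₂ * μ (Icc 0 Real.pi) := by
            gcongr
            exact iUnion_subset hsksub
        _ = ENNReal.ofReal (D₂ * M) := by
            rw [hμIcc, ← ENNReal.ofReal_mul hD₂0.le]
    calc ∫⁻ y in Ioc (1/(n:ℝ)) Real.pi, ENNReal.ofReal (fejerKernel n y) ∂μ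
        ≤ ∫⁻ y in ⋃ k, sk k, ENNReal.ofReal (fejerKernel n y) ∂μ := lintegral_mono_set hcover
      _ ≤ ∑' k : ℕ, ∫⁻ y in sk k, ENNReal.ofReal (fejerKernel n y) ∂μ := lintegral_iUnion_le _ _
      _ ≤ ∑' k : ℕ, (ENNReal.ofReal (D₁ * ((n:ℝ)^γ * L n) * r^k)
            + ENNReal.ofReal D₂ * μ (sk k)) := ENNReal.tsum_le_tsum hterm
      _ = (∑' k : ℕ, ENNReal.ofReal (D₁ * ((n:ℝ)^γ * L n) * r^k))
            + ∑' k : ℕ, ENNReal.ofReal D₂ * μ (sk k) := ENNReal.tsum_add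
      _ ≤ ENNReal.ofReal (D₁ * ((n:ℝ)^γ * L n) * s') + ENNReal.ofReal (D₂ * M) := by
          apply add_le_add _ hsum2
          rw [hsum1, hgeo, ← ENNReal.ofReal_mul (by positivity)]
  have hT : ∫⁻ y in Icc 0 Real.pi, ENNReal.ofReal (fejerKernel n y) ∂μ
      ≤ ENNReal.ofReal (C * (n:ℝ)^γ * L n + (D₁ * ((n:ℝ)^γ * L n) * s' + D₂ * M)) := by
    have hsplit : Icc (0:ℝ) Real.pi = Icc 0 (1/(n:ℝ)) ∪ Ioc (1/(n:ℝ)) Real.pi :=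
      (Icc_union_Ioc_eq_Icc hinvn0.le h1π).symm
    have hnn1 : (0:ℝ) ≤ C * (n:ℝ)^γ * L n := by positivity
    have hnn2 : (0:ℝ) ≤ D₁ * ((n:ℝ)^γ * L n) * s' := by positivity
    have hnn3 : (0:ℝ) ≤ D₂ * M := mul_nonneg hD₂0.le hM0
    calc ∫⁻ y in Icc 0 Real.pi, ENNReal.ofReal (fejerKernel n y) ∂μ
        = ∫⁻ y in Icc 0 (1/(n:ℝ)) ∪ Ioc (1/(n:ℝ)) Real.pi,
            ENNReal.ofReal (fejerKernel n y) ∂μ := by rw [← hsplit]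
      _ ≤ (∫⁻ y in Icc 0 (1/(n:ℝ)), ENNReal.ofReal (fejerKernel n y) ∂μ)
            + ∫⁻ y in Ioc (1/(n:ℝ)) Real.pi, ENNReal.ofReal (fejerKernel n y) ∂μ :=
          lintegral_union_le _ _ _
      _ ≤ ENNReal.ofReal (C * (n:ℝ)^γ * L n)
            + (ENNReal.ofReal (D₁ * ((n:ℝ)^γ * L n) * s') + ENNReal.ofReal (D₂ * M)) := by
          exact add_le_add hhead htail
      _ = ENNReal.ofReal (C * (n:ℝ)^γ * L n + (D₁ * ((n:ℝ)^γ * L n) * s' + D₂ * M)) := by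
          rw [← ENNReal.ofReal_add hnn2 hnn3, ← ENNReal.ofReal_add hnn1 (by linarith)]
  have hvar : varV μ n
      = (∫⁻ y in Icc 0 Real.pi, ENNReal.ofReal (fejerKernel n y) ∂μ).toReal := by
    rw [varV, integral_eq_lintegral_of_nonneg_ae
      (Eventually.of_forall (fun y => fejer_nonneg n y))
      (fejer_measurable n).aestronglyMeasurable]
  have hfin : varV μ n ≤ C * (n:ℝ)^γ * L n + (D₁ * ((n:ℝ)^γ * L n) * s' + D₂ * M) := by
    rw [hvar]
    apply ENNReal.toReal_le_of_le_ofReal _ hT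
    have hnn3 : (0:ℝ) ≤ D₂ * M := mul_nonneg hD₂0.le hM0
    have hnn1 : (0:ℝ) ≤ C * (n:ℝ)^γ * L n := by positivity
    have hnn2 : (0:ℝ) ≤ D₁ * ((n:ℝ)^γ * L n) * s' := by positivity
    linarith
  have hmain : D₂ * M ≤ (D₂ * M / c₀) * ((n:ℝ)^γ * L n) := by
    calc D₂ * M = (D₂ * M / c₀) * c₀ := by field_simp
      _ ≤ (D₂ * M / c₀) * ((n:ℝ)^γ * L n) :=
        mul_le_mul_of_nonneg_left (hc₀le n hn)
          (div_nonneg (mul_nonneg hD₂0.le hM0) hc₀0.le)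
  nlinarith [hfin, hmain, mul_nonneg (mul_nonneg hD₁0.le (mul_nonneg hrpn hLn0.le)) hs'0.le]
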